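/- (Near-independence from stability) Let y, y' be independent draws from a distribution P on ℝⁿ, and let M̂ : ℝⁿ → S be an (η,τ,ν)-stable randomized algorithm with respect to P (with randomness independent of y, y'). Then for any measurable set O ⊆ ℝⁿ × S, P((y, M̂(y)) ∈ O) ≤ (e^η/(1−ν))·P((y', M̂(y)) ∈ O) + τ + ν. -/

import Mathlib

open MeasureTheory ProbabilityTheory
open scoped ENNReal

/-- Two distributions are `(η,τ)`-indistinguishable. -/
def Indist {α : Type*} [MeasurableSpace α] (η τ : ℝ) (μ ν : Measure α) : Prop :=
  ∀ O : Set α, MeasurableSet O →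
    μ O ≤ ENNReal.ofReal (Real.exp η) * ν O + ENNReal.ofReal τ ∧
    ν O ≤ ENNReal.ofReal (Real.exp η) * μ O + ENNReal.ofReal τ

/-- Near-independence from stability: if the randomized selection `M̂` (a Markov
kernel) is `(η,τ,ν)`-stable with respect to `P`, then for every measurable event `O`,
`P((y, M̂(y)) ∈ O) ≤ (e^η/(1-ν)) P((y', M̂(y)) ∈ O) + τ + ν`. -/
theorem near_independence {S : Type*} [Fintype S] [MeasurableSpace S]
    [MeasurableSingletonClass S] {n : ℕ}
    (P : Measure (Fin n → ℝ)) [IsProbabilityMeasure P]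
    (Mhat : Kernel (Fin n → ℝ) S) [IsMarkovKernel Mhat]
    (η τ ν : ℝ) (hη : 0 ≤ η) (hτ : 0 ≤ τ) (hν0 : 0 ≤ ν) (hν1 : ν < 1)
    (hstable : ENNReal.ofReal (1 - ν) ≤
      (P.prod P) {p | Indist η τ (Mhat p.1) (Mhat p.2)})
    (O : Set ((Fin n → ℝ) × S)) (hO : MeasurableSet O) :
    (P ⊗ₘ Mhat) O ≤
      ENNReal.ofReal (Real.exp η / (1 - ν)) *
        (∫⁻ ω, ∫⁻ ω', (Mhat ω) (Prod.mk ω' ⁻¹' O) ∂P ∂P) +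
      ENNReal.ofReal τ + ENNReal.ofReal ν := by
  set c : ℝ≥0∞ := ENNReal.ofReal (Real.exp η) with hc
  set t : ℝ≥0∞ := ENNReal.ofReal τ with ht
  set G : Set ((Fin n → ℝ) × (Fin n → ℝ)) :=
    {p | Indist η τ (Mhat p.1) (Mhat p.2)} with hGdef
  -- measurability of G
  have hGmeas : MeasurableSet G := by
    have hGeq : G = ⋂ (U : Set S),
        ({p : (Fin n → ℝ) × (Fin n → ℝ) | Mhat p.1 U ≤ c * Mhat p.2 U + t} ∩
         {p | Mhat p.2 U ≤ c * Mhat p.1 U + t}) := by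
      ext p
      simp only [hGdef, Set.mem_iInter, Set.mem_inter_iff, Set.mem_setOf_eq, Indist]
      constructor
      · intro h U; exact h U (Set.toFinite U).measurableSet
      · intro h U _; exact h U
    rw [hGeq]
    refine MeasurableSet.iInter fun U => ?_
    have hU : MeasurableSet U := (Set.toFinite U).measurableSet
    have h1 : Measurable fun p : (Fin n → ℝ) × (Fin n → ℝ) => Mhat p.1 U :=
      (Mhat.measurable_coe hU).comp measurable_fst
    have h2 : Measurable fun p : (Fin n → ℝ) × (Fin n → ℝ) => Mhat p.2 U :=
      (Mhat.measurable_coe hU).comp measurable_snd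
    exact (measurableSet_le h1 ((h2.const_mul c).add_const t)).inter
      (measurableSet_le h2 ((h1.const_mul c).add_const t))
  -- functions
  set f : (Fin n → ℝ) → ℝ≥0∞ := fun ω => Mhat ω (Prod.mk ω ⁻¹' O) with hfdef
  have hf : Measurable f := Kernel.measurable_kernel_prodMk_left hO
  set H : (Fin n → ℝ) × (Fin n → ℝ) → ℝ≥0∞ :=
    fun p => Mhat p.2 (Prod.mk p.1 ⁻¹' O) with hHdef
  have hH : Measurable H := by
    have hO' : MeasurableSet
        ((fun q : ((Fin n → ℝ) × (Fin n → ℝ)) × S => (q.1.1, q.2)) ⁻¹' O) :=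
      ((measurable_fst.comp measurable_fst).prodMk measurable_snd) hO
    have := Kernel.measurable_kernel_prodMk_left (κ := Mhat.comap Prod.snd measurable_snd) hO'
    exact this
  -- LHS rewrite
  have hLHS : (P ⊗ₘ Mhat) O = ∫⁻ p, f p.1 ∂(P.prod P) := by
    rw [Measure.compProd_apply hO,
      lintegral_prod (fun p => f p.1) ((hf.comp measurable_fst).aemeasurable)]
    simp [lintegral_const]
    rfl
  -- bound on complement measure
  have hcompl : (P.prod P) Gᶜ ≤ ENNReal.ofReal ν := by
    rw [prob_compl_eq_one_sub hGmeas]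
    have : (1 : ℝ≥0∞) - (P.prod P) G ≤ 1 - ENNReal.ofReal (1 - ν) :=
      tsub_le_tsub_left hstable 1
    refine this.trans ?_
    rw [← ENNReal.ofReal_one, ← ENNReal.ofReal_sub _ (by linarith)]
    simp
  -- double integral identity
  have hdouble : ∫⁻ p, H p ∂(P.prod P)
      = ∫⁻ ω, ∫⁻ ω', (Mhat ω) (Prod.mk ω' ⁻¹' O) ∂P ∂P := by
    rw [lintegral_prod H hH.aemeasurable]
    exact lintegral_lintegral_swap hH.aemeasurable
  set D : ℝ≥0∞ := ∫⁻ ω, ∫⁻ ω', (Mhat ω) (Prod.mk ω' ⁻¹' O) ∂P ∂P with hDdef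
  -- split integral
  have hsplit : ∫⁻ p, f p.1 ∂(P.prod P)
      = (∫⁻ p in G, f p.1 ∂(P.prod P)) + ∫⁻ p in Gᶜ, f p.1 ∂(P.prod P) :=
    (lintegral_add_compl _ hGmeas).symm
  -- bound on G
  have hGbound : (∫⁻ p in G, f p.1 ∂(P.prod P)) ≤ c * D + t := by
    have hle : ∫⁻ p in G, f p.1 ∂(P.prod P) ≤ ∫⁻ p in G, (c * H p + t) ∂(P.prod P) := by
      refine setLIntegral_mono (by fun_prop) fun p hp => ?_
      have hOs : MeasurableSet (Prod.mk p.1 ⁻¹' O) := (Set.toFinite _).measurableSet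
      exact (hp (Prod.mk p.1 ⁻¹' O) hOs).1
    refine hle.trans ?_
    calc ∫⁻ p in G, (c * H p + t) ∂(P.prod P)
        ≤ ∫⁻ p, (c * H p + t) ∂(P.prod P) := setLIntegral_le_lintegral _ _
      _ = c * (∫⁻ p, H p ∂(P.prod P)) + t := by
          rw [lintegral_add_right _ measurable_const, lintegral_const_mul _ hH,
            lintegral_const]
          simp
      _ = c * D + t := by rw [hdouble]
  -- bound on Gᶜ
  have hGcbound : (∫⁻ p in Gᶜ, f p.1 ∂(P.prod P)) ≤ ENNReal.ofReal ν := by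
    have h1 : ∫⁻ p in Gᶜ, f p.1 ∂(P.prod P) ≤ ∫⁻ _ in Gᶜ, 1 ∂(P.prod P) := by
      refine setLIntegral_mono (by fun_prop) fun p _ => ?_
      exact prob_le_one
    rw [setLIntegral_one] at h1
    exact h1.trans hcompl
  -- constant comparison
  have hcD : c * D ≤ ENNReal.ofReal (Real.exp η / (1 - ν)) * D := by
    refine mul_le_mul_left (ENNReal.ofReal_le_ofReal ?_) D
    rw [le_div_iff₀ (by linarith : (0:ℝ) < 1 - ν)]
    nlinarith [Real.exp_pos η]
  calc (P ⊗ₘ Mhat) O = (∫⁻ p in G, f p.1 ∂(P.prod P)) + ∫⁻ p in Gᶜ, f p.1 ∂(P.prod P) := by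
        rw [hLHS, hsplit]
    _ ≤ (c * D + t) + ENNReal.ofReal ν := add_le_add hGbound hGcbound
    _ ≤ (ENNReal.ofReal (Real.exp η / (1 - ν)) * D + t) + ENNReal.ofReal ν := by
        exact add_le_add_left (add_le_add_left hcD t) _
    _ = ENNReal.ofReal (Real.exp η / (1 - ν)) * D + t + ENNReal.ofReal ν := rfl
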